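/- Let X, Θ, Y be separable real Hilbert spaces, U = X × Θ with norm ‖(x,θ)‖_U² = ‖x‖_X² + ‖θ‖_Θ², and F : U → Y Lipschitz with constant L. Let E : U → Y be Lipschitz with constant at most R with ‖E(0)‖_Y ≤ B. For Borel probability measures ν, ν' on U with finite second moments, the risk-shift bound is symmetric in the following sense: |R_{ν'}(E) − R_ν(E)| ≤ c(ν,ν') · W₂(ν,ν'), where R_ν(E) = ∫ ‖F(u) − E(u)‖_Y² dν(u), W₂ is the 2-Wasserstein distance on U, and c(ν,ν') = C₁² √(2(∫‖u‖_U² dν + ∫‖u‖_U² dν')) + 2C₁C₂ with C₁ = L + R and C₂ = ‖F(0)‖_Y + B. -/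

import Mathlib

open MeasureTheory
open scoped ENNReal NNReal

noncomputable section

/-- The Hilbert norm on the product `U = X × Θ`: `‖(x, θ)‖_U = √(‖x‖² + ‖θ‖²)`. -/
def nU {X Θ : Type*} [NormedAddCommGroup X] [NormedAddCommGroup Θ] (u : X × Θ) : ℝ :=
  Real.sqrt (‖u.1‖ ^ 2 + ‖u.2‖ ^ 2)

/-- The 2-Wasserstein distance associated with a cost function `d`: the infimum over all
couplings `γ` of `μ` and `μ'` (i.e. probability measures on the product whose marginals are
`μ` and `μ'`) of `(∫ d(u,v)² dγ)^{1/2}`. -/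
def W2 {α : Type*} [MeasurableSpace α] (d : α → α → ℝ) (μ μ' : Measure α) : ℝ :=
  sInf { r : ℝ | ∃ γ : Measure (α × α), IsProbabilityMeasure γ ∧
      γ.map Prod.fst = μ ∧ γ.map Prod.snd = μ' ∧
      r = Real.sqrt (∫ p, d p.1 p.2 ^ 2 ∂γ) }

/-- The squared-error risk `R_ν(E) = ∫ ‖F(u) - E(u)‖² dν(u)`. -/
def risk {X Θ Y : Type*} [NormedAddCommGroup X] [NormedAddCommGroup Θ] [NormedAddCommGroup Y]
    [MeasurableSpace X] [MeasurableSpace Θ] (F E : X × Θ → Y) (ν : Measure (X × Θ)) : ℝ :=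
  ∫ u, ‖F u - E u‖ ^ 2 ∂ν

/-- The hypothesis class `H`: all maps `E : U → Y` that are Lipschitz with constant at most
`R₀` (with respect to the Hilbert product norm on `U`) and satisfy `‖E 0‖ ≤ B`. -/
def Hclass {X Θ Y : Type*} [NormedAddCommGroup X] [NormedAddCommGroup Θ] [NormedAddCommGroup Y]
    (R₀ B : ℝ) : Set (X × Θ → Y) :=
  { E | (∀ u v, ‖E u - E v‖ ≤ R₀ * nU (u - v)) ∧ ‖E 0‖ ≤ B }

/-- The constant `c(ν,ν') = C₁² √(2(∫‖u‖_U² dν + ∫‖u‖_U² dν')) + 2 C₁ C₂`, where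
`C₁ = L + R₀` and `C₂ = ‖F 0‖ + B`. -/
def cShift {X Θ Y : Type*} [NormedAddCommGroup X] [NormedAddCommGroup Θ] [NormedAddCommGroup Y]
    [MeasurableSpace X] [MeasurableSpace Θ] (L R₀ B : ℝ) (F : X × Θ → Y)
    (ν ν' : Measure (X × Θ)) : ℝ :=
  (L + R₀) ^ 2 * Real.sqrt (2 * ((∫ u, nU u ^ 2 ∂ν) + ∫ u, nU u ^ 2 ∂ν'))
    + 2 * (L + R₀) * (‖F 0‖ + B)

/-- The bound objective `J(ν) = inf_{E ∈ H} R_ν(E) + c(ν, ν_dep) W₂(ν, ν_dep)`, where the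
Wasserstein distance on `U = X × Θ` is taken with respect to the Hilbert product norm. -/
def Jobj {X Θ Y : Type*} [NormedAddCommGroup X] [NormedAddCommGroup Θ] [NormedAddCommGroup Y]
    [MeasurableSpace X] [MeasurableSpace Θ] (L R₀ B : ℝ) (F : X × Θ → Y)
    (νdep ν : Measure (X × Θ)) : ℝ :=
  sInf ((fun E => risk F E ν) '' Hclass R₀ B)
    + cShift L R₀ B F ν νdep * W2 (fun u v => nU (u - v)) ν νdep

section AuxLemmas

variable {X Θ : Type*} [NormedAddCommGroup X] [NormedAddCommGroup Θ]

lemma nU_nonneg (u : X × Θ) : 0 ≤ nU u := Real.sqrt_nonneg _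

lemma nU_sq (u : X × Θ) : nU u ^ 2 = ‖u.1‖ ^ 2 + ‖u.2‖ ^ 2 :=
  Real.sq_sqrt (by positivity)

lemma nU_neg (u : X × Θ) : nU (-u) = nU u := by simp [nU]

lemma nU_cont : Continuous (nU : X × Θ → ℝ) := by
  unfold nU; fun_prop

lemma nU_sub_sq_le (u v : X × Θ) : nU (u - v) ^ 2 ≤ 2 * nU u ^ 2 + 2 * nU v ^ 2 := by
  rw [nU_sq, nU_sq, nU_sq]
  simp only [Prod.fst_sub, Prod.snd_sub]
  have t1 := norm_sub_le u.1 v.1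
  have t2 := norm_sub_le u.2 v.2
  nlinarith [norm_nonneg (u.1 - v.1), norm_nonneg (u.2 - v.2), norm_nonneg u.1,
    norm_nonneg v.1, norm_nonneg u.2, norm_nonneg v.2, sq_nonneg (‖u.1‖ - ‖v.1‖),
    sq_nonneg (‖u.2‖ - ‖v.2‖)]

lemma nU_le_two_norm (u : X × Θ) : nU u ≤ 2 * ‖u‖ := by
  have h1 : ‖u.1‖ ≤ ‖u‖ := norm_fst_le u
  have h2 : ‖u.2‖ ≤ ‖u‖ := norm_snd_le u
  have : nU u ≤ Real.sqrt ((2 * ‖u‖) ^ 2) := by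
    apply Real.sqrt_le_sqrt
    nlinarith [norm_nonneg u, norm_nonneg u.1, norm_nonneg u.2]
  simpa [Real.sqrt_sq (by positivity : (0:ℝ) ≤ 2 * ‖u‖)] using this

lemma nU_pos {u : X × Θ} (hu : u ≠ 0) : 0 < nU u := by
  have h : u.1 ≠ 0 ∨ u.2 ≠ 0 := by
    by_contra hc
    push_neg at hc
    exact hu (Prod.ext hc.1 hc.2)
  apply Real.sqrt_pos.mpr
  rcases h with h | h
  · nlinarith [norm_pos_iff.mpr h, norm_nonneg u.2]
  · nlinarith [norm_pos_iff.mpr h, norm_nonneg u.1]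

/-- If `F` is Lipschitz for the Hilbert product norm, it is continuous (assuming the
constant is nonnegative). -/
lemma continuous_of_nU_lipschitz {Y : Type*} [NormedAddCommGroup Y] {F : X × Θ → Y} {L : ℝ}
    (hL : 0 ≤ L) (hF : ∀ u v : X × Θ, ‖F u - F v‖ ≤ L * nU (u - v)) : Continuous F := by
  have : LipschitzWith (Real.toNNReal (2 * L)) F := by
    apply LipschitzWith.of_dist_le_mul
    intro u v
    rw [dist_eq_norm, dist_eq_norm]
    calc ‖F u - F v‖ ≤ L * nU (u - v) := hF u v
      _ ≤ L * (2 * ‖u - v‖) := mul_le_mul_of_nonneg_left (nU_le_two_norm _) hL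
      _ = (Real.toNNReal (2 * L) : ℝ) * ‖u - v‖ := by
          rw [Real.coe_toNNReal _ (by positivity)]; ring
  exact this.continuous

end AuxLemmas

variable {X Θ Y : Type*}
  [NormedAddCommGroup X] [InnerProductSpace ℝ X] [CompleteSpace X]
  [SecondCountableTopology X] [MeasurableSpace X] [BorelSpace X]
  [NormedAddCommGroup Θ] [InnerProductSpace ℝ Θ] [CompleteSpace Θ]
  [SecondCountableTopology Θ] [MeasurableSpace Θ] [BorelSpace Θ]
  [NormedAddCommGroup Y] [InnerProductSpace ℝ Y] [CompleteSpace Y]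
  [SecondCountableTopology Y]

set_option maxHeartbeats 1000000 in
/-- Core estimate: the risk difference is controlled by any coupling of the two measures. -/
lemma risk_shift_coupling (F E : X × Θ → Y) (L R B : ℝ)
    (hF : ∀ u v : X × Θ, ‖F u - F v‖ ≤ L * nU (u - v))
    (hE : ∀ u v : X × Θ, ‖E u - E v‖ ≤ R * nU (u - v))
    (hE0 : ‖E 0‖ ≤ B) (hL : 0 ≤ L) (hR : 0 ≤ R)
    (ν ν' : Measure (X × Θ)) [IsProbabilityMeasure ν] [IsProbabilityMeasure ν']
    (hν : Integrable (fun u => nU u ^ 2) ν) (hν' : Integrable (fun u => nU u ^ 2) ν')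
    (γ : Measure ((X × Θ) × (X × Θ))) [IsProbabilityMeasure γ]
    (hγ1 : γ.map Prod.fst = ν) (hγ2 : γ.map Prod.snd = ν') :
    |risk F E ν' - risk F E ν|
      ≤ cShift L R B F ν ν' *
        Real.sqrt (∫ p : (X × Θ) × (X × Θ), nU (p.1 - p.2) ^ 2 ∂γ) := by
  have hB : 0 ≤ B := le_trans (norm_nonneg _) hE0
  set C1 : ℝ := L + R with hC1def
  set C2 : ℝ := ‖F 0‖ + B with hC2def
  have hC1 : 0 ≤ C1 := by positivity
  have hC2 : 0 ≤ C2 := by positivity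
  set g : X × Θ → ℝ := fun u => ‖F u - E u‖ ^ 2 with hgdef
  have hFc : Continuous F := continuous_of_nU_lipschitz hL hF
  have hEc : Continuous E := continuous_of_nU_lipschitz hR hE
  have hgc : Continuous g := ((hFc.sub hEc).norm.pow 2)
  have hbound : ∀ u : X × Θ, ‖F u - E u‖ ≤ C1 * nU u + C2 := by
    intro u
    have h1 : F u - E u = (F u - F 0) - (E u - E 0) + (F 0 - E 0) := by abel
    have h2 : ‖F u - E u‖ ≤ ‖F u - F 0‖ + ‖E u - E 0‖ + ‖F 0 - E 0‖ := by
      rw [h1]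
      refine le_trans (norm_add_le _ _) ?_
      gcongr
      exact norm_sub_le _ _
    have h3 := hF u 0
    have h4 := hE u 0
    rw [sub_zero] at h3 h4
    have h5 : ‖F 0 - E 0‖ ≤ ‖F 0‖ + ‖E 0‖ := norm_sub_le _ _
    have := norm_nonneg (E 0)
    simp only [hC1def, hC2def]
    linarith
  have hgint : ∀ (μ : Measure (X × Θ)) [IsProbabilityMeasure μ],
      Integrable (fun u => nU u ^ 2) μ → Integrable g μ := by
    intro μ _ hμ2
    refine Integrable.mono' ((hμ2.const_mul (2 * C1 ^ 2)).add (integrable_const (2 * C2 ^ 2)))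
      hgc.aestronglyMeasurable (ae_of_all _ fun u => ?_)
    have h1 := hbound u
    have h2 := nU_nonneg u
    have h3 := norm_nonneg (F u - E u)
    rw [Real.norm_of_nonneg (by positivity : (0:ℝ) ≤ g u)]
    simp only [hgdef, Pi.add_apply]
    nlinarith [sq_nonneg (C1 * nU u - C2), mul_nonneg hC1 h2, hC2,
      mul_nonneg (mul_nonneg hC1 h2) hC2]
  have hgν : Integrable g ν := hgint ν hν
  have hgν' : Integrable g ν' := hgint ν' hν'
  set m : ℝ := ∫ u, nU u ^ 2 ∂ν with hm
  set m' : ℝ := ∫ u, nU u ^ 2 ∂ν' with hm'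
  set c : ℝ := cShift L R B F ν ν' with hc
  have hcval : c = C1 ^ 2 * Real.sqrt (2 * (m + m')) + 2 * C1 * C2 := rfl
  have hdc : Continuous (fun p : (X × Θ) × (X × Θ) => nU (p.1 - p.2)) :=
    nU_cont.comp (continuous_fst.sub continuous_snd)
  have hn1c : Continuous (fun p : (X × Θ) × (X × Θ) => nU p.1) := nU_cont.comp continuous_fst
  have hn2c : Continuous (fun p : (X × Θ) × (X × Θ) => nU p.2) := nU_cont.comp continuous_snd
  -- transfer of integrability and integrals through the marginals
  have hmap1 : ∀ f : X × Θ → ℝ, Continuous f → Integrable f ν →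
      Integrable (fun p : (X × Θ) × (X × Θ) => f p.1) γ := by
    intro f hfc hfi
    rw [← hγ1] at hfi
    exact
      (integrable_map_measure hfc.aestronglyMeasurable measurable_fst.aemeasurable).mp hfi
  have hmap2 : ∀ f : X × Θ → ℝ, Continuous f → Integrable f ν' →
      Integrable (fun p : (X × Θ) × (X × Θ) => f p.2) γ := by
    intro f hfc hfi
    rw [← hγ2] at hfi
    exact
      (integrable_map_measure hfc.aestronglyMeasurable measurable_snd.aemeasurable).mp hfi
  have hieq1 : ∀ f : X × Θ → ℝ, Continuous f →
      (∫ p : (X × Θ) × (X × Θ), f p.1 ∂γ) = ∫ u, f u ∂ν := by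
    intro f hfc
    conv_rhs => rw [← hγ1]
    exact (integral_map measurable_fst.aemeasurable hfc.aestronglyMeasurable).symm
  have hieq2 : ∀ f : X × Θ → ℝ, Continuous f →
      (∫ p : (X × Θ) × (X × Θ), f p.2 ∂γ) = ∫ u, f u ∂ν' := by
    intro f hfc
    conv_rhs => rw [← hγ2]
    exact (integral_map measurable_snd.aemeasurable hfc.aestronglyMeasurable).symm
  have hn1 : Integrable (fun p : (X × Θ) × (X × Θ) => nU p.1 ^ 2) γ :=
    hmap1 (fun u => nU u ^ 2) (nU_cont.pow 2) hν
  have hn2 : Integrable (fun p : (X × Θ) × (X × Θ) => nU p.2 ^ 2) γ :=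
    hmap2 (fun u => nU u ^ 2) (nU_cont.pow 2) hν'
  have hd2 : Integrable (fun p : (X × Θ) × (X × Θ) => nU (p.1 - p.2) ^ 2) γ := by
    refine Integrable.mono' ((hn1.const_mul 2).add (hn2.const_mul 2))
      ((hdc.pow 2).aestronglyMeasurable) (ae_of_all _ fun p => ?_)
    rw [Real.norm_of_nonneg (by positivity)]
    simpa using nU_sub_sq_le p.1 p.2
  have hsum2 : Integrable (fun p : (X × Θ) × (X × Θ) => (nU p.1 + nU p.2) ^ 2) γ := by
    refine Integrable.mono' ((hn1.const_mul 2).add (hn2.const_mul 2))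
      (((hn1c.add hn2c).pow 2).aestronglyMeasurable) (ae_of_all _ fun p => ?_)
    rw [Real.norm_of_nonneg (by positivity)]
    simp only [Pi.add_apply]
    nlinarith [sq_nonneg (nU p.1 - nU p.2), nU_nonneg p.1, nU_nonneg p.2]
  have hdm2 : MemLp (fun p : (X × Θ) × (X × Θ) => nU (p.1 - p.2)) 2 γ :=
    (memLp_two_iff_integrable_sq hdc.aestronglyMeasurable).mpr hd2
  have hsumL2 : MemLp (fun p : (X × Θ) × (X × Θ) => nU p.1 + nU p.2) 2 γ :=
    (memLp_two_iff_integrable_sq (hn1c.add hn2c).aestronglyMeasurable).mpr hsum2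
  have hmul : Integrable (fun p : (X × Θ) × (X × Θ) =>
      nU (p.1 - p.2) * (nU p.1 + nU p.2)) γ := by
    refine Integrable.mono' ((hd2.add hsum2).div_const 2)
      ((hdc.mul (hn1c.add hn2c)).aestronglyMeasurable) (ae_of_all _ fun p => ?_)
    have h1 := nU_nonneg (p.1 - p.2)
    have h2 := nU_nonneg p.1
    have h3 := nU_nonneg p.2
    rw [Real.norm_of_nonneg (by positivity)]
    simp only [Pi.add_apply]
    nlinarith [sq_nonneg (nU (p.1 - p.2) - (nU p.1 + nU p.2))]
  have hdint : Integrable (fun p : (X × Θ) × (X × Θ) => nU (p.1 - p.2)) γ :=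
    hdm2.integrable one_le_two
  have hgγ1 : Integrable (fun p : (X × Θ) × (X × Θ) => g p.1) γ := hmap1 g hgc hgν
  have hgγ2 : Integrable (fun p : (X × Θ) × (X × Θ) => g p.2) γ := hmap2 g hgc hgν'
  -- the difference of risks as one integral over the coupling
  have hΔ : risk F E ν' - risk F E ν = ∫ p : (X × Θ) × (X × Θ), (g p.2 - g p.1) ∂γ := by
    have r1 : risk F E ν = ∫ p : (X × Θ) × (X × Θ), g p.1 ∂γ := (hieq1 g hgc).symm
    have r2 : risk F E ν' = ∫ p : (X × Θ) × (X × Θ), g p.2 ∂γ := (hieq2 g hgc).symm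
    rw [r1, r2, integral_sub hgγ2 hgγ1]
  -- pointwise estimate
  have pt : ∀ p : (X × Θ) × (X × Θ), |g p.2 - g p.1| ≤
      C1 ^ 2 * (nU (p.1 - p.2) * (nU p.1 + nU p.2)) + 2 * C1 * C2 * nU (p.1 - p.2) := by
    intro p
    have hdnn : 0 ≤ nU (p.1 - p.2) := nU_nonneg _
    have e1 : |‖F p.2 - E p.2‖ - ‖F p.1 - E p.1‖| ≤ C1 * nU (p.1 - p.2) := by
      have h1 : |‖F p.2 - E p.2‖ - ‖F p.1 - E p.1‖| ≤
          ‖(F p.2 - E p.2) - (F p.1 - E p.1)‖ := abs_norm_sub_norm_le _ _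
      have h2 : (F p.2 - E p.2) - (F p.1 - E p.1) =
          (F p.2 - F p.1) - (E p.2 - E p.1) := by abel
      have h5 : nU (p.2 - p.1) = nU (p.1 - p.2) := by
        rw [show p.2 - p.1 = -(p.1 - p.2) by abel, nU_neg]
      have h3 := hF p.2 p.1
      have h4 := hE p.2 p.1
      rw [h5] at h3 h4
      have h6 : ‖(F p.2 - F p.1) - (E p.2 - E p.1)‖ ≤
          ‖F p.2 - F p.1‖ + ‖E p.2 - E p.1‖ := norm_sub_le _ _
      rw [h2] at h1
      simp only [hC1def]
      linarith
    have e2 : ‖F p.2 - E p.2‖ + ‖F p.1 - E p.1‖ ≤ C1 * (nU p.1 + nU p.2) + 2 * C2 := by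
      have b1 := hbound p.1
      have b2 := hbound p.2
      nlinarith [nU_nonneg p.1, nU_nonneg p.2]
    have e3 : |g p.2 - g p.1| = |‖F p.2 - E p.2‖ - ‖F p.1 - E p.1‖| *
        (‖F p.2 - E p.2‖ + ‖F p.1 - E p.1‖) := by
      have : g p.2 - g p.1 = (‖F p.2 - E p.2‖ - ‖F p.1 - E p.1‖) *
          (‖F p.2 - E p.2‖ + ‖F p.1 - E p.1‖) := by
        simp only [hgdef]; ring
      rw [this, abs_mul, abs_of_nonneg (by positivity :
        (0:ℝ) ≤ ‖F p.2 - E p.2‖ + ‖F p.1 - E p.1‖)]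
    rw [e3]
    calc |‖F p.2 - E p.2‖ - ‖F p.1 - E p.1‖| * (‖F p.2 - E p.2‖ + ‖F p.1 - E p.1‖)
        ≤ (C1 * nU (p.1 - p.2)) * (C1 * (nU p.1 + nU p.2) + 2 * C2) :=
          mul_le_mul e1 e2 (by positivity) (by positivity)
      _ = C1 ^ 2 * (nU (p.1 - p.2) * (nU p.1 + nU p.2)) + 2 * C1 * C2 * nU (p.1 - p.2) := by
          ring
  -- Cauchy–Schwarz steps
  set r : ℝ := Real.sqrt (∫ p : (X × Θ) × (X × Θ), nU (p.1 - p.2) ^ 2 ∂γ) with hrdef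
  have hrnn : 0 ≤ r := Real.sqrt_nonneg _
  have hpq : Real.HolderConjugate 2 2 := Real.HolderConjugate.two_two
  have hof : (ENNReal.ofReal (2:ℝ)) = 2 := by norm_num
  have hdm2' : MemLp (fun p : (X × Θ) × (X × Θ) => nU (p.1 - p.2)) (ENNReal.ofReal 2) γ := by
    rw [hof]; exact hdm2
  have hsumL2' : MemLp (fun p : (X × Θ) × (X × Θ) => nU p.1 + nU p.2) (ENNReal.ofReal 2) γ := by
    rw [hof]; exact hsumL2
  have hone' : MemLp (fun _ : (X × Θ) × (X × Θ) => (1:ℝ)) (ENNReal.ofReal 2) γ := by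
    rw [hof]; exact memLp_const 1
  have hCS1 : (∫ p : (X × Θ) × (X × Θ), nU (p.1 - p.2) * (nU p.1 + nU p.2) ∂γ) ≤
      r * Real.sqrt (∫ p : (X × Θ) × (X × Θ), (nU p.1 + nU p.2) ^ 2 ∂γ) := by
    have h := integral_mul_le_Lp_mul_Lq_of_nonneg (μ := γ)
      (f := fun p : (X × Θ) × (X × Θ) => nU (p.1 - p.2))
      (g := fun p : (X × Θ) × (X × Θ) => nU p.1 + nU p.2) hpq
      (ae_of_all _ fun p => nU_nonneg (p.1 - p.2))
      (ae_of_all _ fun p => add_nonneg (nU_nonneg p.1) (nU_nonneg p.2))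
      hdm2' hsumL2'
    simpa only [Real.rpow_two, ← Real.sqrt_eq_rpow, hrdef] using h
  have hCS2 : (∫ p : (X × Θ) × (X × Θ), nU (p.1 - p.2) ∂γ) ≤ r := by
    have h := integral_mul_le_Lp_mul_Lq_of_nonneg (μ := γ)
      (f := fun p : (X × Θ) × (X × Θ) => nU (p.1 - p.2))
      (g := fun _ : (X × Θ) × (X × Θ) => (1:ℝ)) hpq
      (ae_of_all _ fun p => nU_nonneg (p.1 - p.2))
      (ae_of_all _ fun _ => (zero_le_one : (0:ℝ) ≤ 1))
      hdm2' hone'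
    simpa only [mul_one, one_pow, Real.rpow_two, ← Real.sqrt_eq_rpow, hrdef,
      integral_const, measureReal_def, measure_univ, ENNReal.toReal_one, smul_eq_mul,
      Real.sqrt_one] using h
  have hsqsum : Real.sqrt (∫ p : (X × Θ) × (X × Θ), (nU p.1 + nU p.2) ^ 2 ∂γ) ≤
      Real.sqrt (2 * (m + m')) := by
    apply Real.sqrt_le_sqrt
    have h1 : (∫ p : (X × Θ) × (X × Θ), (nU p.1 + nU p.2) ^ 2 ∂γ) ≤
        ∫ p : (X × Θ) × (X × Θ), (2 * nU p.1 ^ 2 + 2 * nU p.2 ^ 2) ∂γ := by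
      refine integral_mono hsum2 ((hn1.const_mul 2).add (hn2.const_mul 2)) fun p => ?_
      nlinarith [sq_nonneg (nU p.1 - nU p.2)]
    have h2 : (∫ p : (X × Θ) × (X × Θ), (2 * nU p.1 ^ 2 + 2 * nU p.2 ^ 2) ∂γ)
        = 2 * m + 2 * m' := by
      rw [integral_add (hn1.const_mul 2) (hn2.const_mul 2), integral_const_mul,
        integral_const_mul, hieq1 (fun u => nU u ^ 2) (nU_cont.pow 2),
        hieq2 (fun u => nU u ^ 2) (nU_cont.pow 2), ← hm, ← hm']
    linarith
  have t1 : (∫ p : (X × Θ) × (X × Θ), nU (p.1 - p.2) * (nU p.1 + nU p.2) ∂γ) ≤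
      r * Real.sqrt (2 * (m + m')) :=
    le_trans hCS1 (mul_le_mul_of_nonneg_left hsqsum hrnn)
  -- put everything together
  calc |risk F E ν' - risk F E ν|
      = |∫ p : (X × Θ) × (X × Θ), (g p.2 - g p.1) ∂γ| := by rw [hΔ]
    _ ≤ ∫ p : (X × Θ) × (X × Θ), |g p.2 - g p.1| ∂γ := by
        simpa using norm_integral_le_integral_norm (μ := γ) (fun p => g p.2 - g p.1)
    _ ≤ ∫ p : (X × Θ) × (X × Θ), (C1 ^ 2 * (nU (p.1 - p.2) * (nU p.1 + nU p.2))
          + 2 * C1 * C2 * nU (p.1 - p.2)) ∂γ :=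
        integral_mono (hgγ2.sub hgγ1).abs
          ((hmul.const_mul _).add (hdint.const_mul _)) pt
    _ = C1 ^ 2 * (∫ p : (X × Θ) × (X × Θ), nU (p.1 - p.2) * (nU p.1 + nU p.2) ∂γ)
          + 2 * C1 * C2 * ∫ p : (X × Θ) × (X × Θ), nU (p.1 - p.2) ∂γ := by
        rw [integral_add (hmul.const_mul _) (hdint.const_mul _), integral_const_mul,
          integral_const_mul]
    _ ≤ C1 ^ 2 * (r * Real.sqrt (2 * (m + m'))) + 2 * C1 * C2 * r := by
        have n1 : (0:ℝ) ≤ C1 ^ 2 := sq_nonneg _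
        have n2 : (0:ℝ) ≤ 2 * C1 * C2 := by nlinarith
        exact add_le_add (mul_le_mul_of_nonneg_left t1 n1)
          (mul_le_mul_of_nonneg_left hCS2 n2)
    _ = c * r := by rw [hcval]; ring


/-- **symmetric risk-shift bound.**
`|R_{ν'}(E) − R_ν(E)| ≤ c(ν,ν') · W₂(ν,ν')`. -/
theorem risk_shift_symm (F E : X × Θ → Y) (L R B : ℝ)
    (hF : ∀ u v : X × Θ, ‖F u - F v‖ ≤ L * nU (u - v))
    (hE : ∀ u v : X × Θ, ‖E u - E v‖ ≤ R * nU (u - v))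
    (hE0 : ‖E 0‖ ≤ B)
    (ν ν' : Measure (X × Θ)) [IsProbabilityMeasure ν] [IsProbabilityMeasure ν']
    (hν : Integrable (fun u => nU u ^ 2) ν) (hν' : Integrable (fun u => nU u ^ 2) ν') :
    |risk F E ν' - risk F E ν|
      ≤ cShift L R B F ν ν' * W2 (fun u v => nU (u - v)) ν ν' := by
  classical
  set S : Set ℝ := { r : ℝ | ∃ γ : Measure ((X × Θ) × (X × Θ)), IsProbabilityMeasure γ ∧
      γ.map Prod.fst = ν ∧ γ.map Prod.snd = ν' ∧
      r = Real.sqrt (∫ p, nU (p.1 - p.2) ^ 2 ∂γ) } with hS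
  have hW2 : W2 (fun u v => nU (u - v)) ν ν' = sInf S := rfl
  have hSne : S.Nonempty := by
    refine ⟨Real.sqrt (∫ p, nU (p.1 - p.2) ^ 2 ∂(ν.prod ν')), ν.prod ν', inferInstance, ?_, ?_, rfl⟩
    · simp [Measure.map_fst_prod]
    · simp [Measure.map_snd_prod]
  rw [hW2]
  by_cases hsub : Subsingleton (X × Θ)
  · -- degenerate case: the space is a single point
    have hu0 : ∀ u : X × Θ, u = 0 := fun u => Subsingleton.elim u 0
    have hrisk : risk F E ν' = risk F E ν := by
      unfold risk
      have h1 : ∀ u : X × Θ, ‖F u - E u‖ ^ 2 = ‖F 0 - E 0‖ ^ 2 := fun u => by rw [hu0 u]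
      simp only [h1, integral_const, measureReal_def, measure_univ, ENNReal.toReal_one, smul_eq_mul, one_mul]
    rw [hrisk, sub_self, abs_zero]
    have hSzero : S = {0} := by
      apply Set.eq_singleton_iff_nonempty_unique_mem.mpr
      refine ⟨hSne, ?_⟩
      rintro r ⟨γ, hγp, hγ1, hγ2, rfl⟩
      have : ∀ p : (X × Θ) × (X × Θ), nU (p.1 - p.2) ^ 2 = 0 := by
        intro p
        have : p.1 - p.2 = 0 := Subsingleton.elim _ _
        rw [this]
        simp [nU]
      simp [this]
    rw [hSzero, csInf_singleton, mul_zero]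
  · -- main case: the space is nontrivial
    have hnt : Nontrivial (X × Θ) := not_subsingleton_iff_nontrivial.mp hsub
    obtain ⟨u₀, v₀, hne⟩ := hnt
    have hw0 : (0:ℝ) < nU (u₀ - v₀) := nU_pos (sub_ne_zero.mpr hne)
    have hL : 0 ≤ L := by nlinarith [hF u₀ v₀, norm_nonneg (F u₀ - F v₀)]
    have hR : 0 ≤ R := by nlinarith [hE u₀ v₀, norm_nonneg (E u₀ - E v₀)]
    have hB : 0 ≤ B := le_trans (norm_nonneg _) hE0
    set C1 : ℝ := L + R with hC1def
    set C2 : ℝ := ‖F 0‖ + B with hC2def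
    have hC1 : 0 ≤ C1 := by positivity
    have hC2 : 0 ≤ C2 := by positivity
    set m : ℝ := ∫ u, nU u ^ 2 ∂ν with hm
    set m' : ℝ := ∫ u, nU u ^ 2 ∂ν' with hm'
    set c : ℝ := cShift L R B F ν ν' with hc
    have hcval : c = C1 ^ 2 * Real.sqrt (2 * (m + m')) + 2 * C1 * C2 := by
      rw [hc]; simp only [cShift, ← hm, ← hm', ← hC1def, ← hC2def]
    have hcnn : 0 ≤ c := by
      rw [hcval]
      have h1 := Real.sqrt_nonneg (2 * (m + m'))
      nlinarith [mul_nonneg hC1 hC2, mul_nonneg (sq_nonneg C1) h1]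
    -- the key estimate for each coupling
    have key : ∀ r ∈ S, |risk F E ν' - risk F E ν| ≤ c * r := by
      rintro r ⟨γ, hγp, hγ1, hγ2, rfl⟩
      haveI := hγp
      exact risk_shift_coupling F E L R B hF hE hE0 hL hR ν ν' hν hν' γ hγ1 hγ2
    -- conclude
    rcases hcnn.eq_or_lt with hc0 | hcpos
    · obtain ⟨r₀, hr₀⟩ := hSne
      have h := key r₀ hr₀
      rw [← hc0] at h ⊢
      simpa using h
    · have h1 : |risk F E ν' - risk F E ν| / c ≤ sInf S := by
        refine le_csInf hSne fun r hr => ?_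
        rw [div_le_iff₀ hcpos]
        calc |risk F E ν' - risk F E ν| ≤ c * r := key r hr
          _ = r * c := mul_comm _ _
      calc |risk F E ν' - risk F E ν| = c * (|risk F E ν' - risk F E ν| / c) := by
            field_simp
        _ ≤ c * sInf S := mul_le_mul_of_nonneg_left h1 hcnn
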